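/- Let v ∈ V, a, b ∈ ℕ, and φ an element of the degree-b component S^b V of the symmetric algebra. Then ‖v^a φ‖² ≤ ((a+b)!/(a!·b!)) · ‖v^a‖² · ‖φ‖² in the permanent inner product. -/

import Mathlib

open scoped BigOperators ComplexConjugate

/-- The permanent inner product on degree-`d` symmetric tensors. -/
noncomputable def permInner {V : Type*} [NormedAddCommGroup V] [InnerProductSpace ℂ V]
    {d : ℕ} (x y : Fin d → V) : ℂ :=
  ∑ π : Equiv.Perm (Fin d), ∏ k, (inner ℂ (x k) (y (π k)) : ℂ)

namespace Stmt8Aux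

set_option linter.unusedSectionVars false

variable {V : Type*} [NormedAddCommGroup V] [InnerProductSpace ℂ V]


lemma permInner_conj {d : ℕ} (x y : Fin d → V) :
    permInner y x = conj (permInner x y) := by
  unfold permInner
  rw [map_sum]
  rw [← Equiv.sum_comp (Equiv.inv (Equiv.Perm (Fin d)))
    (fun π => conj (∏ k, (inner ℂ (x k) (y (π k)) : ℂ)))]
  refine Finset.sum_congr rfl fun π _ => ?_
  rw [map_prod]
  have : ∀ k, conj (inner ℂ (x k) (y ((Equiv.inv (Equiv.Perm (Fin d)) π) k)) : ℂ)
      = (inner ℂ (y (π⁻¹ k)) (x k) : ℂ) := fun k => by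
    simp [inner_conj_symm]
  simp_rw [this]
  rw [← Equiv.prod_comp π (fun k => (inner ℂ (y (π⁻¹ k)) (x k) : ℂ))]
  simp

lemma permInner_comp_right {d : ℕ} (x y : Fin d → V) (σ : Equiv.Perm (Fin d)) :
    permInner x (y ∘ σ) = permInner x y := by
  unfold permInner
  rw [← Equiv.sum_comp (Equiv.mulLeft σ) (fun π => ∏ k, (inner ℂ (x k) (y (π k)) : ℂ))]
  refine Finset.sum_congr rfl fun π _ => ?_
  simp [Function.comp, Equiv.Perm.mul_apply]

def rem {d : ℕ} (l : Fin (d + 1)) (w : Fin (d + 1) → V) : Fin d → V :=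
  fun k => w (Equiv.swap 0 l k.succ)

lemma permInner_cons {d : ℕ} (v : V) (x : Fin d → V) (w : Fin (d + 1) → V) :
    permInner (Fin.cons v x) w = ∑ l, (inner ℂ v (w l) : ℂ) * permInner x (rem l w) := by
  unfold permInner
  have h := Equiv.sum_comp (Equiv.Perm.decomposeFin.symm :
      Fin (d+1) × Equiv.Perm (Fin d) ≃ Equiv.Perm (Fin (d+1)))
    (fun π : Equiv.Perm (Fin (d+1)) => ∏ k, (inner ℂ ((Fin.cons v x : Fin (d+1) → V) k) (w (π k)) : ℂ))
  rw [← h, Fintype.sum_prod_type]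
  refine Finset.sum_congr rfl fun p _ => ?_
  rw [Finset.mul_sum]
  refine Finset.sum_congr rfl fun e _ => ?_
  rw [Fin.prod_univ_succ]
  simp only [Fin.cons_zero, Fin.cons_succ, Equiv.Perm.decomposeFin_symm_apply_zero,
    Equiv.Perm.decomposeFin_symm_apply_succ]
  rfl



lemma rem_zero_cons {d : ℕ} (v : V) (w : Fin d → V) :
    rem 0 (Fin.cons v w) = w := by
  funext k
  simp [rem]

lemma rem_succ_cons {d : ℕ} (v : V) (w : Fin d → V) (m : Fin d) :
    rem m.succ (Fin.cons v w) = Function.update w m v := by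
  funext k
  rcases eq_or_ne k m with h | h
  · subst h
    simp [rem, Equiv.swap_apply_right]
  · rw [Function.update_of_ne h]
    have h1 : (k.succ : Fin (d+1)) ≠ 0 := Fin.succ_ne_zero k
    have h2 : (k.succ : Fin (d+1)) ≠ m.succ := by
      simpa [Fin.succ_inj] using h
    simp [rem, Equiv.swap_apply_of_ne_of_ne h1 h2]

lemma update_eq_cons_rem {e : ℕ} (v : V) (w : Fin (e + 1) → V) (m : Fin (e + 1)) :
    Function.update w m v = (Fin.cons v (rem m w) : Fin (e + 1) → V) ∘ (Equiv.swap 0 m) := by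
  funext k
  rcases eq_or_ne k m with h | h
  · subst h
    simp [Equiv.swap_apply_right]
  · rw [Function.update_of_ne h]
    rcases eq_or_ne k 0 with h0 | h0
    · subst h0
      have hm : m ≠ 0 := Ne.symm h
      simp only [Function.comp_apply, Equiv.swap_apply_left]
      rw [← Fin.succ_pred m hm, Fin.cons_succ]
      simp [rem, Fin.succ_pred, Equiv.swap_apply_right]
    · have : Equiv.swap (0 : Fin (e+1)) m k = k := Equiv.swap_apply_of_ne_of_ne h0 h
      simp only [Function.comp_apply, this]
      conv_rhs => rw [← Fin.succ_pred k h0, Fin.cons_succ]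
      simp [rem, Fin.succ_pred, Equiv.swap_apply_of_ne_of_ne h0 h]

noncomputable def pSum {n m : Type} [Fintype n] [Fintype m] {d : ℕ}
    (c : n → ℂ) (u : n → Fin d → V) (c' : m → ℂ) (u' : m → Fin d → V) : ℂ :=
  ∑ j, ∑ k, conj (c j) * c' k * permInner (u j) (u' k)

lemma pSum_self_nonneg {n : Type} [Fintype n] {d : ℕ} (c : n → ℂ) (u : n → Fin d → V) :
    0 ≤ (pSum c u c u).re := by
  classical
  set s : Set V := ⋃ j, Set.range (u j) with hs_def
  have hs : s.Finite := Set.finite_iUnion fun j => Set.finite_range (u j)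
  haveI : FiniteDimensional ℂ (Submodule.span ℂ s) := FiniteDimensional.span_of_finite ℂ hs
  set E := Submodule.span ℂ s with hE_def
  let bas := stdOrthonormalBasis ℂ E
  set N := Module.finrank ℂ E with hN_def
  have hmem : ∀ j i, u j i ∈ E := fun j i =>
    Submodule.subset_span (Set.mem_iUnion.2 ⟨j, Set.mem_range_self i⟩)
  set f : n → Fin d → Fin N → ℂ :=
    (fun j i t => inner ℂ (bas t : E) (⟨u j i, hmem j i⟩ : E)) with hf_def
  have hinner : ∀ j i k i', (inner ℂ (u j i) (u k i') : ℂ) = ∑ t, conj (f j i t) * f k i' t := by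
    intro j i k i'
    have h1 : (inner ℂ (u j i) (u k i') : ℂ)
        = inner ℂ (⟨u j i, hmem j i⟩ : E) (⟨u k i', hmem k i'⟩ : E) := rfl
    rw [h1, ← bas.sum_inner_mul_inner]
    refine Finset.sum_congr rfl fun t _ => ?_
    simp [hf_def]
  set F : (Fin d → Fin N) → ℂ := (fun t => ∑ j, c j * ∏ i, f j i (t i)) with hF_def
  set G : (Fin d → Fin N) → ℂ := (fun t => ∑ π : Equiv.Perm (Fin d), F (t ∘ π)) with hG_def
  set g : (n × n) → ((Fin d → Fin N) × Equiv.Perm (Fin d)) → ℂ :=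
    (fun p q => conj (c p.1) * c p.2 *
      (conj (∏ i, f p.1 i (q.1 i)) * ∏ i, f p.2 i (q.1 (q.2 i)))) with hg_def
  -- step 1 : pSum = ∑_{t, π} conj (F t) * F (t ∘ π)
  have hjk : ∀ j k, conj (c j) * c k * permInner (u j) (u k)
      = ∑ q : (Fin d → Fin N) × Equiv.Perm (Fin d), g (j, k) q := by
    intro j k
    rw [Fintype.sum_prod_type, Finset.sum_comm]
    unfold permInner
    rw [Finset.mul_sum]
    rw [← Equiv.sum_comp (Equiv.inv (Equiv.Perm (Fin d)))
      (fun π => conj (c j) * c k * ∏ i, (inner ℂ (u j i) (u k (π i)) : ℂ))]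
    refine Finset.sum_congr rfl fun π _ => ?_
    simp only [Equiv.inv_apply]
    have hprod : ∏ i, (inner ℂ (u j i) (u k (π⁻¹ i)) : ℂ)
        = ∑ t : Fin d → Fin N, conj (∏ i, f j i (t i)) * ∏ i, f k i (t (π i)) := by
      have hpi : ∀ i, (inner ℂ (u j i) (u k (π⁻¹ i)) : ℂ)
          = ∑ tt, conj (f j i tt) * f k (π⁻¹ i) tt := fun i => hinner j i k (π⁻¹ i)
      rw [Finset.prod_congr rfl fun i _ => hpi i, Finset.prod_univ_sum]
      rw [Fintype.piFinset_univ]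
      refine Finset.sum_congr rfl fun t _ => ?_
      rw [Finset.prod_mul_distrib, ← map_prod]
      congr 1
      rw [← Equiv.prod_comp π (fun i => f k (π⁻¹ i) (t i))]
      simp
    rw [hprod, Finset.mul_sum]
    try refine Finset.sum_congr rfl fun t _ => ?_
    try rw [hg_def]
    try ring
  have htπ : ∀ (t : Fin d → Fin N) (π : Equiv.Perm (Fin d)),
      conj (F t) * F (t ∘ π) = ∑ p : n × n, g p (t, π) := by
    intro t π
    rw [Fintype.sum_prod_type]
    rw [hF_def]
    simp only [map_sum, Finset.sum_mul, Finset.mul_sum, map_mul]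
    rw [Finset.sum_comm]
    refine Finset.sum_congr rfl fun j _ => Finset.sum_congr rfl fun k _ => ?_
    rw [hg_def]
    simp only [Function.comp_apply]
    ring
  have h1 : pSum c u c u = ∑ t : Fin d → Fin N, ∑ π : Equiv.Perm (Fin d),
      conj (F t) * F (t ∘ π) := by
    unfold pSum
    calc ∑ j, ∑ k, conj (c j) * c k * permInner (u j) (u k)
        = ∑ p : n × n, ∑ q : (Fin d → Fin N) × Equiv.Perm (Fin d), g p q := by
          rw [Fintype.sum_prod_type]
          exact Finset.sum_congr rfl fun j _ => Finset.sum_congr rfl fun k _ => hjk j k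
      _ = ∑ q : (Fin d → Fin N) × Equiv.Perm (Fin d), ∑ p : n × n, g p q :=
          Finset.sum_comm
      _ = ∑ t : Fin d → Fin N, ∑ π : Equiv.Perm (Fin d), conj (F t) * F (t ∘ π) := by
          rw [Fintype.sum_prod_type]
          exact Finset.sum_congr rfl fun t _ =>
            Finset.sum_congr rfl fun π _ => (htπ t π).symm
  -- step 2 : (d! : ℂ) * pSum = ∑_t conj (G t) * G t
  have h2 : (d.factorial : ℂ) * pSum c u c u = ∑ t : Fin d → Fin N, conj (G t) * G t := by
    have hG2 : ∀ t, conj (G t) * G t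
        = ∑ σ : Equiv.Perm (Fin d), ∑ π : Equiv.Perm (Fin d),
            conj (F (t ∘ σ)) * F (t ∘ π) := by
      intro t
      rw [hG_def]
      simp only [map_sum, Finset.sum_mul, Finset.mul_sum]
      rw [Finset.sum_comm]
    simp_rw [hG2]
    rw [Finset.sum_comm]
    have hσ : ∀ σ : Equiv.Perm (Fin d),
        (∑ t : Fin d → Fin N, ∑ π : Equiv.Perm (Fin d), conj (F (t ∘ σ)) * F (t ∘ π))
          = pSum c u c u := by
      intro σ
      rw [h1]
      calc ∑ t : Fin d → Fin N, ∑ π : Equiv.Perm (Fin d), conj (F (t ∘ σ)) * F (t ∘ π)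
          = ∑ t : Fin d → Fin N, ∑ π : Equiv.Perm (Fin d),
              conj (F (t ∘ σ)) * F ((t ∘ σ) ∘ π) := by
            refine Finset.sum_congr rfl fun t _ => ?_
            rw [← Equiv.sum_comp (Equiv.mulLeft σ)
              (fun π : Equiv.Perm (Fin d) => conj (F (t ∘ σ)) * F (t ∘ π))]
            refine Finset.sum_congr rfl fun π _ => ?_
            have hcomp : (t ∘ ⇑((Equiv.mulLeft σ) π)) = (t ∘ ⇑σ) ∘ ⇑π := by
              funext i
              simp [Equiv.Perm.mul_apply]
            rw [hcomp]
        _ = ∑ t : Fin d → Fin N, ∑ π : Equiv.Perm (Fin d), conj (F t) * F (t ∘ π) := by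
            rw [← Equiv.sum_comp (Equiv.arrowCongr σ⁻¹ (Equiv.refl (Fin N)))
              (fun t => ∑ π : Equiv.Perm (Fin d), conj (F t) * F (t ∘ π))]
            refine Finset.sum_congr rfl fun t _ => ?_
            have harr : ((Equiv.arrowCongr σ⁻¹ (Equiv.refl (Fin N))) t) = t ∘ σ := by
              funext i
              simp [Equiv.arrowCongr, Equiv.Perm.inv_def]
            rw [harr]
    rw [Finset.sum_congr rfl fun σ _ => hσ σ, Finset.sum_const, Finset.card_univ,
      Fintype.card_perm, Fintype.card_fin, nsmul_eq_mul]
  -- conclude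
  have h3 : ((d.factorial : ℂ) * pSum c u c u).re
      = ∑ t : Fin d → Fin N, Complex.normSq (G t) := by
    rw [h2, Complex.re_sum]
    refine Finset.sum_congr rfl fun t _ => ?_
    rw [mul_comm, Complex.mul_conj, Complex.ofReal_re]
  have h4 : (0:ℝ) ≤ (d.factorial : ℝ) * (pSum c u c u).re := by
    have hre : ((d.factorial : ℂ) * pSum c u c u).re
        = (d.factorial : ℝ) * (pSum c u c u).re := by
      simp [Complex.mul_re]
    rw [← hre, h3]
    exact Finset.sum_nonneg fun t _ => Complex.normSq_nonneg _
  have h5 : (0 : ℝ) < d.factorial := by exact_mod_cast Nat.factorial_pos d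
  nlinarith
lemma pSum_conj {n m : Type} [Fintype n] [Fintype m] {d : ℕ}
    (c : n → ℂ) (u : n → Fin d → V) (c' : m → ℂ) (u' : m → Fin d → V) :
    pSum c u c' u' = conj (pSum c' u' c u) := by
  unfold pSum
  rw [map_sum, Finset.sum_comm]
  refine Finset.sum_congr rfl fun k _ => ?_
  rw [map_sum]
  refine Finset.sum_congr rfl fun j _ => ?_
  rw [permInner_conj (u j) (u' k)]
  simp only [map_mul, Complex.conj_conj]
  ring

lemma pSum_cs {n m : Type} [Fintype n] [Fintype m] {d : ℕ}
    (c : n → ℂ) (u : n → Fin d → V) (c' : m → ℂ) (u' : m → Fin d → V) :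
    (pSum c u c' u').re ≤ Real.sqrt ((pSum c u c u).re * (pSum c' u' c' u').re) := by
  classical
  set a := (pSum c u c u).re with ha
  set bb := (pSum c u c' u').re with hb
  set cc := (pSum c' u' c' u').re with hc
  have hcomb : ∀ t : ℝ,
      (pSum (Sum.elim c fun k => (t:ℂ) * c' k) (Sum.elim u u')
        (Sum.elim c fun k => (t:ℂ) * c' k) (Sum.elim u u'))
      = pSum c u c u + (t:ℂ) * pSum c u c' u' + ((t:ℂ) * pSum c' u' c u
          + (t:ℂ)^2 * pSum c' u' c' u') := by
    intro t
    unfold pSum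
    rw [Fintype.sum_sum_type]
    simp only [Fintype.sum_sum_type, Sum.elim_inl, Sum.elim_inr, map_mul, Complex.conj_ofReal]
    rw [Finset.sum_add_distrib, Finset.sum_add_distrib]
    have e2 : ∑ j : n, ∑ k : m, conj (c j) * ((t:ℂ) * c' k) * permInner (u j) (u' k)
        = (t:ℂ) * ∑ j : n, ∑ k : m, conj (c j) * c' k * permInner (u j) (u' k) := by
      rw [Finset.mul_sum]
      refine Finset.sum_congr rfl fun j _ => ?_
      rw [Finset.mul_sum]
      refine Finset.sum_congr rfl fun k _ => ?_
      ring
    have e3 : ∑ j : m, ∑ k : n, (t:ℂ) * conj (c' j) * c k * permInner (u' j) (u k)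
        = (t:ℂ) * ∑ j : m, ∑ k : n, conj (c' j) * c k * permInner (u' j) (u k) := by
      rw [Finset.mul_sum]
      refine Finset.sum_congr rfl fun j _ => ?_
      rw [Finset.mul_sum]
      refine Finset.sum_congr rfl fun k _ => ?_
      ring
    have e4 : ∑ j : m, ∑ k : m, (t:ℂ) * conj (c' j) * ((t:ℂ) * c' k) * permInner (u' j) (u' k)
        = (t:ℂ)^2 * ∑ j : m, ∑ k : m, conj (c' j) * c' k * permInner (u' j) (u' k) := by
      rw [Finset.mul_sum]
      refine Finset.sum_congr rfl fun j _ => ?_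
      rw [Finset.mul_sum]
      refine Finset.sum_congr rfl fun k _ => ?_
      ring
    rw [e2, e3, e4]
  have hq : ∀ t : ℝ, 0 ≤ cc * (t * t) + (2 * bb) * t + a := by
    intro t
    have h0 := pSum_self_nonneg (V := V)
      (Sum.elim c fun k => (t:ℂ) * c' k) (Sum.elim u u')
    rw [hcomb t] at h0
    have hconj : (pSum c' u' c u).re = bb := by
      rw [pSum_conj c' u' c u]
      simp [hb, Complex.conj_re]
    have h1 : (pSum c u c u + (t:ℂ) * pSum c u c' u' + ((t:ℂ) * pSum c' u' c u
          + (t:ℂ)^2 * pSum c' u' c' u')).re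
        = a + t * bb + (t * bb + t^2 * cc) := by
      rw [← Complex.ofReal_pow]
      simp only [Complex.add_re, Complex.re_ofReal_mul]
      rw [hconj]
    rw [h1] at h0
    nlinarith [h0]
  have hd := discrim_le_zero hq
  rw [discrim] at hd
  have hann : 0 ≤ a := by rw [ha]; exact pSum_self_nonneg c u
  have hcnn : 0 ≤ cc := by rw [hc]; exact pSum_self_nonneg c' u'
  have hb2 : bb^2 ≤ a * cc := by nlinarith
  calc bb ≤ |bb| := le_abs_self _
    _ = Real.sqrt (bb^2) := (Real.sqrt_sq_eq_abs bb).symm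
    _ ≤ Real.sqrt (a * cc) := Real.sqrt_le_sqrt hb2
/-- annihilation coefficients -/
noncomputable def annC (v : V) {n : Type} {d : ℕ} (c : n → ℂ) (u : n → Fin (d + 1) → V) :
    n × Fin (d + 1) → ℂ := fun p => c p.1 * (inner ℂ v (u p.1 p.2) : ℂ)

def annU (v : V) {n : Type} {d : ℕ} (u : n → Fin (d + 1) → V) :
    n × Fin (d + 1) → Fin d → V := fun p => rem p.2 (u p.1)

lemma pSum_cons_ann {n m : Type} [Fintype n] [Fintype m] {d : ℕ} (v : V)
    (c : n → ℂ) (u : n → Fin d → V) (c' : m → ℂ) (u' : m → Fin (d + 1) → V) :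
    pSum c (fun j => (Fin.cons v (u j) : Fin (d + 1) → V)) c' u'
      = pSum c u (annC v c' u') (annU v u') := by
  unfold pSum annC annU
  refine Finset.sum_congr rfl fun j _ => ?_
  rw [Fintype.sum_prod_type]
  refine Finset.sum_congr rfl fun k _ => ?_
  rw [permInner_cons v (u j) (u' k), Finset.mul_sum]
  try refine Finset.sum_congr rfl fun l _ => ?_
  try ring

lemma pSum_ann_cons {n m : Type} [Fintype n] [Fintype m] {d : ℕ} (v : V)
    (c : n → ℂ) (u : n → Fin (d + 1) → V) (c' : m → ℂ) (u' : m → Fin d → V) :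
    pSum c u c' (fun k => (Fin.cons v (u' k) : Fin (d + 1) → V))
      = pSum (annC v c u) (annU v u) c' u' := by
  rw [pSum_conj c u c' _, pSum_cons_ann v c' u' c u, pSum_conj (annC v c u) (annU v u) c' u']
  try rw [Complex.conj_conj]

/-- key commutation : ⟪vφ, vφ⟫ = ‖v‖² ⟪φ,φ⟫ + ⟪aφ, aφ⟫ (degree ≥ 1 case) -/
lemma pSum_key {n : Type} [Fintype n] {d : ℕ} (v : V)
    (c : n → ℂ) (u : n → Fin (d + 1) → V) :
    pSum c (fun j => (Fin.cons v (u j) : Fin (d + 2) → V)) c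
        (fun j => (Fin.cons v (u j) : Fin (d + 2) → V))
      = (inner ℂ v v : ℂ) * pSum c u c u
        + pSum (annC v c u) (annU v u) (annC v c u) (annU v u) := by
  rw [pSum_cons_ann v c u c (fun j => (Fin.cons v (u j) : Fin (d + 2) → V)),
    ← pSum_ann_cons v c u (annC v c u) (annU v u)]
  unfold pSum annC annU
  have hsplit : ∀ j : n,
      (∑ p : n × Fin (d + 2), conj (c j) * (c p.1 * (inner ℂ v ((Fin.cons v (u p.1) : Fin (d+2) → V) p.2) : ℂ))
          * permInner (u j) (rem p.2 (Fin.cons v (u p.1))))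
        = (∑ k : n, (inner ℂ v v : ℂ) * (conj (c j) * c k * permInner (u j) (u k)))
          + ∑ q : n × Fin (d + 1), conj (c j) * (c q.1 * (inner ℂ v (u q.1 q.2) : ℂ))
              * permInner (u j) ((Fin.cons v (rem q.2 (u q.1)) : Fin (d+1) → V)) := by
    intro j
    rw [Fintype.sum_prod_type, Fintype.sum_prod_type]
    rw [← Finset.sum_add_distrib]
    refine Finset.sum_congr rfl fun k _ => ?_
    rw [Fin.sum_univ_succ]
    congr 1
    · rw [rem_zero_cons v (u k)]
      simp only [Fin.cons_zero]
      ring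
    · refine Finset.sum_congr rfl fun m _ => ?_
      rw [rem_succ_cons v (u k) m, update_eq_cons_rem v (u k) m,
        permInner_comp_right (u j) _ (Equiv.swap 0 m)]
      simp only [Fin.cons_succ]
  rw [Finset.sum_congr rfl fun j _ => hsplit j]
  rw [Finset.sum_add_distrib, Finset.mul_sum]
  congr 1
  · refine Finset.sum_congr rfl fun j _ => ?_
    rw [Finset.mul_sum]

lemma pSum_key0 {n : Type} [Fintype n] (v : V) (c : n → ℂ) (u : n → Fin 0 → V) :
    pSum c (fun j => (Fin.cons v (u j) : Fin 1 → V)) c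
        (fun j => (Fin.cons v (u j) : Fin 1 → V))
      = (inner ℂ v v : ℂ) * pSum c u c u := by
  rw [pSum_cons_ann v c u c (fun j => (Fin.cons v (u j) : Fin 1 → V))]
  unfold pSum annC annU
  rw [Finset.mul_sum]
  refine Finset.sum_congr rfl fun j _ => ?_
  rw [Fintype.sum_prod_type, Finset.mul_sum]
  refine Finset.sum_congr rfl fun k _ => ?_
  rw [Fin.sum_univ_one]
  rw [rem_zero_cons v (u k)]
  simp only [Fin.cons_zero]
  ring

lemma inner_mul_re (v : V) (z : ℂ) : ((inner ℂ v v : ℂ) * z).re = ‖v‖^2 * z.re := by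
  have h : (inner ℂ v v : ℂ) = ((‖v‖^2 : ℝ) : ℂ) := by
    rw [inner_self_eq_norm_sq_to_K]
    norm_cast
  rw [h, Complex.re_ofReal_mul]

lemma sqrt_step {t s C : ℝ} (h : t ≤ Real.sqrt (s * (C * t))) (ht : 0 ≤ t)
    (hC0 : 0 ≤ C) (hs : 0 ≤ s) : t ≤ C * s := by
  rcases eq_or_lt_of_le ht with h0 | h0
  · rw [← h0]; positivity
  · have hX : 0 ≤ s * (C * t) := by positivity
    have h3 : t * t ≤ Real.sqrt (s * (C * t)) * Real.sqrt (s * (C * t)) :=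
      mul_le_mul h h ht (Real.sqrt_nonneg _)
    rw [Real.mul_self_sqrt hX] at h3
    nlinarith

lemma ann_bound (v : V) : ∀ (e : ℕ) (n : Type) [Fintype n] (c : n → ℂ)
    (u : n → Fin (e + 1) → V),
    (pSum (annC v c u) (annU v u) (annC v c u) (annU v u)).re
      ≤ ((e + 1 : ℕ) : ℝ) * ‖v‖^2 * (pSum c u c u).re := by
  intro e
  induction e with
  | zero =>
    intro n _ c u
    have hid : pSum c u (annC v c u) (fun q => (Fin.cons v (annU v u q) : Fin 1 → V))
        = pSum (annC v c u) (annU v u) (annC v c u) (annU v u) :=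
      pSum_ann_cons v c u _ _
    have hcs := pSum_cs c u (annC v c u)
      (fun q => (Fin.cons v (annU v u q) : Fin 1 → V))
    rw [hid] at hcs
    have hk0 := pSum_key0 v (annC v c u) (annU v u)
    have hw : (pSum (fun q => annC v c u q)
        (fun q => (Fin.cons v (annU v u q) : Fin 1 → V))
        (fun q => annC v c u q)
        (fun q => (Fin.cons v (annU v u q) : Fin 1 → V))).re
        = ‖v‖^2 * (pSum (annC v c u) (annU v u) (annC v c u) (annU v u)).re := by
      rw [hk0, inner_mul_re]
    rw [hw] at hcs
    have ht : 0 ≤ (pSum (annC v c u) (annU v u) (annC v c u) (annU v u)).re :=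
      pSum_self_nonneg _ _
    have hs : 0 ≤ (pSum c u c u).re := pSum_self_nonneg _ _
    have := sqrt_step hcs ht (by positivity) hs
    calc (pSum (annC v c u) (annU v u) (annC v c u) (annU v u)).re
        ≤ ‖v‖^2 * (pSum c u c u).re := this
      _ = ((0 + 1 : ℕ) : ℝ) * ‖v‖^2 * (pSum c u c u).re := by norm_num
  | succ e IH =>
    intro n _ c u
    set ψc := annC v c u with hψc
    set ψu := annU v u with hψu
    have hid : pSum c u ψc (fun q => (Fin.cons v (ψu q) : Fin (e + 2) → V))
        = pSum ψc ψu ψc ψu := pSum_ann_cons v c u _ _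
    have hcs := pSum_cs c u ψc (fun q => (Fin.cons v (ψu q) : Fin (e + 2) → V))
    rw [hid] at hcs
    have hkey := pSum_key v ψc ψu
    have hIH := IH (n × Fin (e + 2)) ψc ψu
    have ht : 0 ≤ (pSum ψc ψu ψc ψu).re := pSum_self_nonneg _ _
    have hs : 0 ≤ (pSum c u c u).re := pSum_self_nonneg _ _
    have hw : (pSum (fun q => ψc q) (fun q => (Fin.cons v (ψu q) : Fin (e + 2) → V))
        (fun q => ψc q) (fun q => (Fin.cons v (ψu q) : Fin (e + 2) → V))).re
        ≤ ((e + 2 : ℕ) : ℝ) * ‖v‖^2 * (pSum ψc ψu ψc ψu).re := by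
      rw [hkey]
      rw [Complex.add_re, inner_mul_re]
      have : (pSum (annC v ψc ψu) (annU v ψu) (annC v ψc ψu) (annU v ψu)).re
          ≤ ((e + 1 : ℕ) : ℝ) * ‖v‖^2 * (pSum ψc ψu ψc ψu).re := hIH
      push_cast
      push_cast at this
      nlinarith [ht]
    have hsq : (pSum ψc ψu ψc ψu).re
        ≤ Real.sqrt ((pSum c u c u).re
            * (((e + 2 : ℕ) : ℝ) * ‖v‖^2 * (pSum ψc ψu ψc ψu).re)) := by
      refine le_trans hcs (Real.sqrt_le_sqrt ?_)
      exact mul_le_mul_of_nonneg_left hw hs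
    have := sqrt_step hsq ht (by positivity) hs
    push_cast at this ⊢
    linarith

lemma cons_bound {n : Type} [Fintype n] (v : V) (b : ℕ) (c : n → ℂ) (u : n → Fin b → V) :
    (pSum c (fun j => (Fin.cons v (u j) : Fin (b + 1) → V)) c
        (fun j => (Fin.cons v (u j) : Fin (b + 1) → V))).re
      ≤ ((b + 1 : ℕ) : ℝ) * ‖v‖^2 * (pSum c u c u).re := by
  cases b with
  | zero =>
    rw [pSum_key0 v c u, inner_mul_re]
    have hs : 0 ≤ (pSum c u c u).re := pSum_self_nonneg _ _
    norm_num
  | succ e =>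
    rw [pSum_key v c u, Complex.add_re, inner_mul_re]
    have h := ann_bound v e n c u
    have hs : 0 ≤ (pSum c u c u).re := pSum_self_nonneg _ _
    push_cast
    push_cast at h
    nlinarith [h]
variable {A : Type*} [CommRing A] [Algebra ℂ A] (ι : V →ₗ[ℂ] A)
    (B : A →ₗ⋆[ℂ] A →ₗ[ℂ] ℂ)

lemma B_el (hBperm : ∀ {d : ℕ} (x y : Fin d → V),
      B (∏ i, ι (x i)) (∏ i, ι (y i)) = permInner x y)
    {nn mm : ℕ} {d : ℕ} (c : Fin nn → ℂ) (u : Fin nn → Fin d → V)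
    (c' : Fin mm → ℂ) (u' : Fin mm → Fin d → V) :
    B (∑ j, c j • ∏ i, ι (u j i)) (∑ k, c' k • ∏ i, ι (u' k i)) = pSum c u c' u' := by
  unfold pSum
  rw [map_sum, Finset.sum_comm]
  refine Finset.sum_congr rfl fun k _ => ?_
  rw [map_smul, smul_eq_mul, map_sum, LinearMap.sum_apply, Finset.mul_sum]
  refine Finset.sum_congr rfl fun j _ => ?_
  rw [LinearMap.map_smulₛₗ, LinearMap.smul_apply, smul_eq_mul, hBperm]
  ring

lemma prod_cons_eq {d : ℕ} (v : V) (w : Fin d → V) :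
    (∏ i, ι ((Fin.cons v w : Fin (d + 1) → V) i)) = ι v * ∏ i, ι (w i) := by
  rw [Fin.prod_univ_succ]
  simp

lemma mul_mem_span (v : V) (b : ℕ) {φ : A}
    (hφ : φ ∈ Submodule.span ℂ {x : A | ∃ u : Fin b → V, x = ∏ i, ι (u i)}) :
    ι v * φ ∈ Submodule.span ℂ {x : A | ∃ u : Fin (b + 1) → V, x = ∏ i, ι (u i)} := by
  induction hφ using Submodule.span_induction with
  | mem x hx =>
    obtain ⟨u, rfl⟩ := hx
    refine Submodule.subset_span ⟨(Fin.cons v u : Fin (b+1) → V), ?_⟩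
    rw [prod_cons_eq]
  | zero => simp
  | add x y _ _ hx hy =>
    rw [mul_add]
    exact Submodule.add_mem _ hx hy
  | smul a x _ hx =>
    rw [mul_smul_comm]
    exact Submodule.smul_mem _ _ hx

lemma B_step (hBperm : ∀ {d : ℕ} (x y : Fin d → V),
      B (∏ i, ι (x i)) (∏ i, ι (y i)) = permInner x y)
    (v : V) (b : ℕ) {φ : A}
    (hφ : φ ∈ Submodule.span ℂ {x : A | ∃ u : Fin b → V, x = ∏ i, ι (u i)}) :
    (B (ι v * φ) (ι v * φ)).re ≤ ((b + 1 : ℕ) : ℝ) * ‖v‖^2 * (B φ φ).re := by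
  classical
  obtain ⟨nn, c, g, hg⟩ := Submodule.mem_span_set'.1 hφ
  choose u hu using fun j => (g j).2
  have hφ' : φ = ∑ j, c j • ∏ i, ι (u j i) := by
    rw [← hg]
    refine Finset.sum_congr rfl fun j _ => ?_
    rw [← hu j]
  have hμ : ι v * φ = ∑ j, c j • ∏ i, ι ((Fin.cons v (u j) : Fin (b+1) → V) i) := by
    rw [hφ', Finset.mul_sum]
    refine Finset.sum_congr rfl fun j _ => ?_
    rw [prod_cons_eq, mul_smul_comm]
  rw [hμ, hφ', B_el ι B hBperm, B_el ι B hBperm]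
  exact cons_bound v b c u

lemma B_pow (hBperm : ∀ {d : ℕ} (x y : Fin d → V),
      B (∏ i, ι (x i)) (∏ i, ι (y i)) = permInner x y) (v : V) (a : ℕ) :
    (B (ι v ^ a) (ι v ^ a)).re = (a.factorial : ℝ) * (‖v‖^2)^a := by
  have hpow : (ι v) ^ a = ∏ _i : Fin a, ι v := by
    rw [Finset.prod_const, Finset.card_univ, Fintype.card_fin]
  rw [hpow, hBperm (fun _ => v) (fun _ => v)]
  unfold permInner
  have hterm : ∀ π : Equiv.Perm (Fin a),
      (∏ _k : Fin a, (inner ℂ v v : ℂ)) = (((‖v‖^2)^a : ℝ) : ℂ) := by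
    intro π
    have h : (inner ℂ v v : ℂ) = ((‖v‖^2 : ℝ) : ℂ) := by
      rw [inner_self_eq_norm_sq_to_K]; norm_cast
    rw [Finset.prod_const, Finset.card_univ, Fintype.card_fin, h]
    norm_cast
  rw [Finset.sum_congr rfl fun π _ => hterm π, Finset.sum_const, Finset.card_univ,
    Fintype.card_perm, Fintype.card_fin, nsmul_eq_mul]
  have : ((a.factorial : ℂ) * (((‖v‖^2)^a : ℝ) : ℂ)).re = (a.factorial : ℝ) * (‖v‖^2)^a := by
    norm_cast
  exact this

lemma B_main (hBperm : ∀ {d : ℕ} (x y : Fin d → V),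
      B (∏ i, ι (x i)) (∏ i, ι (y i)) = permInner x y) (v : V) :
    ∀ (a b : ℕ) (φ : A), φ ∈ Submodule.span ℂ {x : A | ∃ u : Fin b → V, x = ∏ i, ι (u i)} →
    (B (ι v ^ a * φ) (ι v ^ a * φ)).re
      ≤ ((a + b).factorial / b.factorial : ℝ) * (‖v‖^2)^a * (B φ φ).re := by
  intro a
  induction a with
  | zero =>
    intro b φ hφ
    have hb : (b.factorial : ℝ) ≠ 0 := by exact_mod_cast b.factorial_ne_zero
    rw [pow_zero, one_mul, zero_add, div_self hb, pow_zero]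
    simp
  | succ a IH =>
    intro b φ hφ
    have h1 : ι v ^ (a + 1) * φ = ι v ^ a * (ι v * φ) := by ring
    have hspan := mul_mem_span ι v b hφ
    have h2 := IH (b + 1) (ι v * φ) hspan
    have h3 := B_step ι B hBperm v b hφ
    have hb : (b.factorial : ℝ) ≠ 0 := by exact_mod_cast b.factorial_ne_zero
    have hb1 : ((b + 1 : ℕ) : ℝ) ≠ 0 := by positivity
    calc (B (ι v ^ (a + 1) * φ) (ι v ^ (a + 1) * φ)).re
        = (B (ι v ^ a * (ι v * φ)) (ι v ^ a * (ι v * φ))).re := by rw [h1]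
      _ ≤ ((a + (b + 1)).factorial / (b + 1).factorial : ℝ) * (‖v‖^2)^a
            * (B (ι v * φ) (ι v * φ)).re := h2
      _ ≤ ((a + (b + 1)).factorial / (b + 1).factorial : ℝ) * (‖v‖^2)^a
            * (((b + 1 : ℕ) : ℝ) * ‖v‖^2 * (B φ φ).re) := by
          exact mul_le_mul_of_nonneg_left h3 (by positivity)
      _ = ((a + 1 + b).factorial / b.factorial : ℝ) * (‖v‖^2)^(a + 1) * (B φ φ).re := by
          have hfac : ((a + (b + 1)).factorial : ℝ) = ((a + 1 + b).factorial : ℝ) := by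
            have h : a + (b + 1) = a + 1 + b := by omega
            rw [h]
          have hfac2 : ((b + 1).factorial : ℝ) = ((b + 1 : ℕ) : ℝ) * (b.factorial : ℝ) := by
            rw [Nat.factorial_succ]
            push_cast
            ring
          rw [hfac, hfac2]
          field_simp
          ring

end Stmt8Aux

/-- Let `v ∈ V`, `a b ∈ ℕ`, and `φ ∈ S^b V` (an element of the span of degree-`b` monomials
in the symmetric algebra, modelled by a commutative ℂ-algebra `A` with inclusion
`ι : V →ₗ[ℂ] A` carrying the sesquilinear permanent inner product `B`).  Then
`‖v^a φ‖² ≤ ((a+b)!/(a!·b!)) · ‖v^a‖² · ‖φ‖²`. -/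
theorem stmt8 {V : Type*} [NormedAddCommGroup V] [InnerProductSpace ℂ V]
    {A : Type*} [CommRing A] [Algebra ℂ A] (ι : V →ₗ[ℂ] A)
    (B : A →ₗ⋆[ℂ] A →ₗ[ℂ] ℂ)
    (hBperm : ∀ {d : ℕ} (x y : Fin d → V),
      B (∏ i, ι (x i)) (∏ i, ι (y i)) = permInner x y)
    (v : V) (a b : ℕ) (φ : A)
    (hφ : φ ∈ Submodule.span ℂ {x : A | ∃ u : Fin b → V, x = ∏ i, ι (u i)}) :
    (B (ι v ^ a * φ) (ι v ^ a * φ)).re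
      ≤ ((a + b).factorial / (a.factorial * b.factorial) : ℝ) *
          (B (ι v ^ a) (ι v ^ a)).re * (B φ φ).re := by
  classical
  have hmain := Stmt8Aux.B_main ι B hBperm v a b φ hφ
  have hpow := Stmt8Aux.B_pow ι B hBperm v a
  rw [hpow]
  have hb : (b.factorial : ℝ) ≠ 0 := by exact_mod_cast b.factorial_ne_zero
  have ha : (a.factorial : ℝ) ≠ 0 := by exact_mod_cast a.factorial_ne_zero
  have hco : ((a + b).factorial / (a.factorial * b.factorial) : ℝ)
        * ((a.factorial : ℝ) * (‖v‖^2)^a)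
      = ((a + b).factorial / b.factorial : ℝ) * (‖v‖^2)^a := by
    field_simp
  calc (B (ι v ^ a * φ) (ι v ^ a * φ)).re
      ≤ ((a + b).factorial / b.factorial : ℝ) * (‖v‖^2)^a * (B φ φ).re := hmain
    _ = ((a + b).factorial / (a.factorial * b.factorial) : ℝ)
          * ((a.factorial : ℝ) * (‖v‖^2)^a) * (B φ φ).re := by rw [hco]
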